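/- arXiv:2511.17778 — 3 statements merged into one kernel-verified Lean document; each statement's English description precedes it below -/
import Mathlib

section
/- Let r ≥ 1 be an integer, q a positive integer, and B a real number with 2 ≤ B < √q. Define, for integers b₁,…,b_{2r}, A_j = ∏_{i≠j} (b_i − b_j). Then the sum over all tuples (b₁,…,b_{2r}) with 1 ≤ b_i ≤ B of min{gcd(A_j, q) : 1 ≤ j ≤ 2r, A_j ≠ 0} (interpreting the minimum over an empty set as 0) is at most 2r·(τ(q)/2)^{2r−1}·B^{2r}. -/
/-- `Aprod b j = ∏_{i ≠ j} (b i - b j)`. -/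
def Aprod {m : ℕ} (b : Fin m → ℤ) (j : Fin m) : ℤ :=
  ∏ i ∈ Finset.univ.filter fun i => i ≠ j, (b i - b j)

/-- `min { gcd(A_j, q) : A_j ≠ 0 }`, interpreted as `0` if all `A_j` vanish. -/
def minGcd {m : ℕ} (b : Fin m → ℤ) (q : ℕ) : ℕ :=
  if h : (Finset.univ.filter fun j : Fin m => Aprod b j ≠ 0).Nonempty then
    ((Finset.univ.filter fun j : Fin m => Aprod b j ≠ 0).image
        fun j => Int.gcd (Aprod b j) q).min' (h.image _)
  else 0

open Finset

lemma gcd_prod_le {ι : Type*} (q : ℕ) (hq : 0 < q) (s : Finset ι) (f : ι → ℤ) :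
    Int.gcd (∏ i ∈ s, f i) (q : ℤ) ≤ ∏ i ∈ s, Int.gcd (f i) (q : ℤ) := by
  classical
  have hgpos : ∀ x : ℤ, 0 < Int.gcd x (q : ℤ) := fun x =>
    Int.gcd_pos_iff.mpr (Or.inr (by exact_mod_cast hq.ne'))
  induction s using Finset.induction_on with
  | empty => simp
  | @insert a s ha ih =>
    rw [Finset.prod_insert ha, Finset.prod_insert ha]
    have h1 : Int.gcd (f a * ∏ i ∈ s, f i) (q : ℤ) ∣
        Int.gcd (f a) (q : ℤ) * Int.gcd (∏ i ∈ s, f i) (q : ℤ) := by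
      simp only [Int.gcd, Int.natAbs_mul, Int.natAbs_natCast]
      rw [Nat.gcd_comm _ q, Nat.gcd_comm (f a).natAbs q,
        Nat.gcd_comm (∏ i ∈ s, f i).natAbs q]
      exact Nat.gcd_mul_right_dvd_mul_gcd q _ _
    calc Int.gcd (f a * ∏ i ∈ s, f i) (q:ℤ)
        ≤ Int.gcd (f a) (q:ℤ) * Int.gcd (∏ i ∈ s, f i) (q:ℤ) :=
          Nat.le_of_dvd (Nat.mul_pos (hgpos _) (hgpos _)) h1
      _ ≤ Int.gcd (f a) (q:ℤ) * ∏ i ∈ s, Int.gcd (f i) (q:ℤ) :=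
          Nat.mul_le_mul_left _ ih

lemma count_mult (N y : ℤ) (hy1 : 1 ≤ y) (hy2 : y ≤ N) (d : ℕ) (hd : 0 < d) :
    (d : ℤ) * ((Finset.Icc (1:ℤ) N).filter fun x => x ≠ y ∧ (d:ℤ) ∣ x - y).card ≤ N - 1 := by
  have hD0 : (0:ℤ) < (d:ℤ) := by exact_mod_cast hd
  set D : ℤ := (d : ℤ) with hD
  set lo : ℤ := -((y - 1) / D) with hlo
  set hi : ℤ := (N - y) / D with hhi
  set s := (Finset.Icc (1:ℤ) N).filter (fun x => x ≠ y ∧ (d:ℤ) ∣ x - y) with hs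
  have hmaps : ∀ x ∈ s, (x - y) / D ∈ (Finset.Icc lo hi).erase 0 := by
    intro x hx
    simp only [hs, Finset.mem_filter, Finset.mem_Icc] at hx
    obtain ⟨⟨hx1, hx2⟩, hxy, hdvd⟩ := hx
    obtain ⟨k, hk⟩ := hdvd
    have hkdiv : (x - y) / D = k := by rw [hk]; exact Int.mul_ediv_cancel_left k hD0.ne'
    rw [hkdiv]
    have hk0 : k ≠ 0 := by rintro rfl; simp at hk; omega
    refine Finset.mem_erase.mpr ⟨hk0, Finset.mem_Icc.mpr ⟨?_, ?_⟩⟩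
    · have : -k ≤ (y - 1) / D := by
        rw [Int.le_ediv_iff_mul_le hD0]
        nlinarith [hk]
      omega
    · rw [hhi, ← hkdiv]
      exact Int.ediv_le_ediv hD0 (by omega)
  have hinj : Set.InjOn (fun x => (x - y) / D) s := by
    intro a ha b hb hab
    simp only [Finset.mem_coe, hs, Finset.mem_filter] at ha hb
    have ha2 := Int.ediv_mul_cancel ha.2.2
    have hb2 := Int.ediv_mul_cancel hb.2.2
    simp only at hab
    have : (a - y) / D * D = (b - y) / D * D := by rw [hab]
    rw [ha2, hb2] at this
    omega
  have hcard : s.card ≤ ((Finset.Icc lo hi).erase 0).card :=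
    Finset.card_le_card_of_injOn _ hmaps hinj
  have h0mem : (0:ℤ) ∈ Finset.Icc lo hi := by
    refine Finset.mem_Icc.mpr ⟨?_, ?_⟩
    · simp only [hlo]
      have : 0 ≤ (y - 1) / D := Int.ediv_nonneg (by omega) hD0.le
      omega
    · exact Int.ediv_nonneg (by omega) hD0.le
  have hlo0 : lo ≤ 0 := (Finset.mem_Icc.mp h0mem).1
  have hhi0 : 0 ≤ hi := (Finset.mem_Icc.mp h0mem).2
  have hec : ((Finset.Icc lo hi).erase 0).card + 1 = (Finset.Icc lo hi).card :=
    Finset.card_erase_add_one h0mem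
  have hIcc : (Finset.Icc lo hi).card = (hi + 1 - lo).toNat := Int.card_Icc lo hi
  have hcardZ : (s.card : ℤ) ≤ hi - lo := by
    have h1 : ((Finset.Icc lo hi).card : ℤ) = hi + 1 - lo := by
      rw [hIcc]; rw [Int.toNat_of_nonneg (by omega)]
    have := hcard
    omega
  have hup : D * hi ≤ N - y := by
    have h1 := Int.mul_ediv_add_emod (N - y) D
    have h2 := Int.emod_nonneg (N - y) hD0.ne'
    rw [hhi]; linarith
  have hdn : D * ((y - 1) / D) ≤ y - 1 := by
    have h1 := Int.mul_ediv_add_emod (y - 1) D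
    have h2 := Int.emod_nonneg (y - 1) hD0.ne'
    linarith
  have hmul : D * (s.card : ℤ) ≤ D * (hi - lo) :=
    mul_le_mul_of_nonneg_left hcardZ hD0.le
  have hexp : D * (hi - lo) = D * hi + D * ((y - 1) / D) := by rw [hlo]; ring
  linarith

lemma card_small_divisors (q : ℕ) (hq : 0 < q) :
    2 * ((q.divisors).filter fun d => d * d < q).card ≤ (q.divisors).card := by
  set T := (q.divisors).filter (fun d => d * d < q) with hT
  have hsub : T ⊆ q.divisors := Finset.filter_subset _ _
  have hinj : Set.InjOn (fun d => q / d) T := by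
    intro a ha b hb hab
    rw [Finset.mem_coe] at ha hb
    have ha' := (Nat.mem_divisors.mp (hsub ha)).1
    have hb' := (Nat.mem_divisors.mp (hsub hb)).1
    have h1 : q / (q / a) = a := Nat.div_div_self ha' hq.ne'
    have h2 : q / (q / b) = b := Nat.div_div_self hb' hq.ne'
    simp only at hab
    rw [← h1, ← h2, hab]
  have hmaps : ∀ d ∈ T, q / d ∈ q.divisors \ T := by
    intro d hd
    have hdmem := hsub hd
    have hdvd := (Nat.mem_divisors.mp hdmem).1
    have hdpos : 0 < d := Nat.pos_of_mem_divisors hdmem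
    have hsmall : d * d < q := (Finset.mem_filter.mp hd).2
    have hqd : d * (q / d) = q := Nat.mul_div_cancel' hdvd
    have hqdpos : 0 < q / d := Nat.div_pos (Nat.le_of_dvd hq hdvd) hdpos
    refine Finset.mem_sdiff.mpr ⟨Nat.mem_divisors.mpr ⟨⟨d, (Nat.div_mul_cancel hdvd).symm⟩, hq.ne'⟩, ?_⟩
    simp only [hT, Finset.mem_filter]
    push_neg
    intro _
    have hlt : d < q / d := by
      have h5 : d * d < d * (q / d) := by rw [hqd]; exact hsmall
      exact lt_of_mul_lt_mul_left h5 (Nat.zero_le d)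
    calc q = d * (q / d) := hqd.symm
      _ ≤ (q / d) * (q / d) := Nat.mul_le_mul_right _ hlt.le
  have h1 : T.card ≤ (q.divisors \ T).card :=
    Finset.card_le_card_of_injOn _ hmaps hinj
  have h2 : (q.divisors \ T).card = q.divisors.card - T.card := Finset.card_sdiff_of_subset hsub
  have h3 : T.card ≤ q.divisors.card := Finset.card_le_card hsub
  omega

lemma sum_gcd_le (q : ℕ) (hq : 0 < q) (B : ℝ) (hB2 : 2 ≤ B) (hBq : B < Real.sqrt q)
    (y : ℤ) (hy : y ∈ Finset.Icc (1:ℤ) ⌊B⌋) :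
    ∑ x ∈ Finset.Icc (1:ℤ) ⌊B⌋, (if x ≠ y then ((Int.gcd (x - y) (q:ℤ)) : ℝ) else 0)
      ≤ B * ((q.divisors.card : ℝ) / 2) := by
  rw [Finset.mem_Icc] at hy
  have hNB : ((⌊B⌋ : ℤ) : ℝ) ≤ B := Int.floor_le B
  have hN2 : (2:ℤ) ≤ ⌊B⌋ := by exact_mod_cast Int.le_floor.mpr (by exact_mod_cast hB2)
  set N : ℤ := ⌊B⌋ with hN
  set T := (q.divisors).filter (fun d => d * d < q) with hT
  set g : ℤ → ℕ := fun x => Int.gcd (x - y) (q:ℤ) with hg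
  set s := (Finset.Icc (1:ℤ) N).filter (fun x => x ≠ y) with hs
  rw [← Finset.sum_filter]
  have hmaps : ∀ x ∈ s, g x ∈ T := by
    intro x hx
    simp only [hs, Finset.mem_filter, Finset.mem_Icc] at hx
    obtain ⟨⟨hx1, hx2⟩, hxy⟩ := hx
    have hsub : x - y ≠ 0 := sub_ne_zero.mpr hxy
    have hdq : g x ∣ q := by
      have := @Int.gcd_dvd_right (x - y) (q:ℤ)
      exact_mod_cast this
    have hdxy : (g x : ℤ) ∣ x - y := Int.gcd_dvd_left _ _
    have hdle : (g x : ℤ) ≤ |x - y| := by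
      rw [Int.abs_eq_natAbs]
      have : g x ∣ (x - y).natAbs := by
        rw [← Int.natAbs_natCast (g x)]
        exact Int.natAbs_dvd_natAbs.mpr hdxy
      exact_mod_cast Nat.le_of_dvd (Int.natAbs_pos.mpr hsub) this
    have habs : |x - y| ≤ N - 1 := by rw [abs_le]; omega
    have hdR : (g x : ℝ) < Real.sqrt q := by
      have h1 : ((g x : ℤ) : ℝ) ≤ ((N - 1 : ℤ) : ℝ) := by exact_mod_cast le_trans hdle habs
      push_cast at h1
      calc (g x : ℝ) ≤ (N : ℝ) - 1 := h1
        _ ≤ B - 1 := by linarith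
        _ < B := by linarith
        _ < Real.sqrt q := hBq
    have hsq : g x * g x < q := by
      have h0 : (0:ℝ) ≤ (g x : ℝ) := Nat.cast_nonneg _
      have h2 : (g x : ℝ) * (g x : ℝ) < Real.sqrt q * Real.sqrt q :=
        mul_self_lt_mul_self h0 hdR
      rw [Real.mul_self_sqrt (Nat.cast_nonneg q)] at h2
      exact_mod_cast h2
    exact Finset.mem_filter.mpr ⟨Nat.mem_divisors.mpr ⟨hdq, hq.ne'⟩, hsq⟩
  rw [← Finset.sum_fiberwise_of_maps_to hmaps (fun x => ((g x : ℕ) : ℝ))]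
  have hfiber : ∀ d ∈ T, ∑ x ∈ s.filter (fun x => g x = d), ((g x : ℕ) : ℝ) ≤ B := by
    intro d hd
    have hdpos : 0 < d := Nat.pos_of_mem_divisors (Finset.mem_filter.mp hd).1
    have heq : ∑ x ∈ s.filter (fun x => g x = d), ((g x : ℕ) : ℝ)
        = (s.filter (fun x => g x = d)).card * (d : ℝ) := by
      rw [Finset.sum_congr rfl (fun x hx => by
        rw [(Finset.mem_filter.mp hx).2]), Finset.sum_const, nsmul_eq_mul]
    rw [heq]
    have hsubset : s.filter (fun x => g x = d)
        ⊆ (Finset.Icc (1:ℤ) N).filter (fun x => x ≠ y ∧ (d:ℤ) ∣ x - y) := by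
      intro x hx
      simp only [hs, Finset.mem_filter, Finset.mem_Icc] at hx ⊢
      obtain ⟨⟨hxI, hxy⟩, hgx⟩ := hx
      refine ⟨hxI, hxy, ?_⟩
      rw [← hgx]
      exact Int.gcd_dvd_left _ _
    have hcard := Finset.card_le_card hsubset
    have hcm := count_mult N y hy.1 hy.2 d hdpos
    have : (d : ℝ) * ((s.filter (fun x => g x = d)).card : ℝ) ≤ (N : ℝ) - 1 := by
      have h1 : (d:ℤ) * ((s.filter (fun x => g x = d)).card : ℤ) ≤ N - 1 := by
        calc (d:ℤ) * ((s.filter (fun x => g x = d)).card : ℤ)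
            ≤ (d:ℤ) * (((Finset.Icc (1:ℤ) N).filter
                (fun x => x ≠ y ∧ (d:ℤ) ∣ x - y)).card : ℤ) := by
              apply mul_le_mul_of_nonneg_left _ (by positivity)
              exact_mod_cast hcard
          _ ≤ N - 1 := hcm
      exact_mod_cast h1
    calc ((s.filter (fun x => g x = d)).card : ℝ) * (d : ℝ) ≤ (N:ℝ) - 1 := by linarith
      _ ≤ B := by linarith
  calc ∑ d ∈ T, ∑ x ∈ s.filter (fun x => g x = d), ((g x : ℕ) : ℝ)
      ≤ ∑ d ∈ T, B := Finset.sum_le_sum hfiber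
    _ = T.card * B := by rw [Finset.sum_const, nsmul_eq_mul]
    _ ≤ ((q.divisors.card : ℝ) / 2) * B := by
        apply mul_le_mul_of_nonneg_right _ (by linarith)
        have := card_small_divisors q hq
        have h2 : ((2 * T.card : ℕ) : ℝ) ≤ ((q.divisors.card : ℕ) : ℝ) := by exact_mod_cast this
        push_cast at h2
        linarith
    _ = B * ((q.divisors.card : ℝ) / 2) := by ring

lemma fubini_bound (m q : ℕ) (hq : 0 < q) (B : ℝ) (hB2 : 2 ≤ B) (hBq : B < Real.sqrt q)
    (j : Fin m) :
    ∑ b ∈ Fintype.piFinset (fun _ : Fin m => Finset.Icc (1:ℤ) ⌊B⌋),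
      ∏ i ∈ Finset.univ.filter (fun i => i ≠ j),
        (if b i ≠ b j then ((Int.gcd (b i - b j) (q:ℤ)) : ℝ) else 0)
      ≤ B * (B * ((q.divisors.card : ℝ) / 2)) ^ (m - 1) := by
  classical
  set S := Finset.Icc (1:ℤ) ⌊B⌋ with hS
  set τ2 : ℝ := (q.divisors.card : ℝ) / 2 with hτ2
  set h : ℤ → ℤ → ℝ := fun x y => if x ≠ y then ((Int.gcd (x - y) (q:ℤ)) : ℝ) else 0 with hh
  have hnonneg : ∀ x y, 0 ≤ h x y := by
    intro x y; simp only [hh]; split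
    · exact Nat.cast_nonneg _
    · exact le_refl 0
  have hτ2nn : 0 ≤ τ2 := by positivity
  have hBnn : (0:ℝ) ≤ B := by linarith
  have step1 : ∀ b ∈ Fintype.piFinset (fun _ : Fin m => S),
      ∏ i ∈ univ.filter (fun i => i ≠ j), h (b i) (b j)
        = ∑ y ∈ S, if b j = y then ∏ i ∈ univ.filter (fun i => i ≠ j), h (b i) y else 0 := by
    intro b hb
    rw [Finset.sum_ite_eq S (b j) (fun y => ∏ i ∈ univ.filter (fun i => i ≠ j), h (b i) y),
      if_pos ((Fintype.mem_piFinset.mp hb) j)]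
  rw [show (∑ b ∈ Fintype.piFinset (fun _ : Fin m => S),
      ∏ i ∈ univ.filter (fun i => i ≠ j), h (b i) (b j))
      = ∑ b ∈ Fintype.piFinset (fun _ : Fin m => S), ∑ y ∈ S,
          if b j = y then ∏ i ∈ univ.filter (fun i => i ≠ j), h (b i) y else 0
      from Finset.sum_congr rfl step1, Finset.sum_comm]
  have step2 : ∀ y ∈ S,
      (∑ b ∈ Fintype.piFinset (fun _ : Fin m => S),
        if b j = y then ∏ i ∈ univ.filter (fun i => i ≠ j), h (b i) y else 0)
        ≤ (B * τ2) ^ (m - 1) := by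
    intro y hy
    set g : Fin m → ℤ → ℝ :=
      fun i x => if i = j then (if x = y then 1 else 0) else h x y with hgdef
    have herase : univ.filter (fun i => i ≠ j) = univ.erase j := by
      ext i; simp [Finset.mem_erase, and_comm]
    have hpt : ∀ b : Fin m → ℤ,
        (if b j = y then ∏ i ∈ univ.filter (fun i => i ≠ j), h (b i) y else 0)
          = ∏ i, g i (b i) := by
      intro b
      rw [← Finset.mul_prod_erase univ (fun i => g i (b i)) (mem_univ j)]
      have h1 : ∏ i ∈ univ.erase j, g i (b i) = ∏ i ∈ univ.erase j, h (b i) y :=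
        Finset.prod_congr rfl (fun i hi => by
          simp only [hgdef]; rw [if_neg (Finset.mem_erase.mp hi).1])
      rw [h1, herase]
      simp only [hgdef, if_pos rfl]
      split <;> simp
    calc (∑ b ∈ Fintype.piFinset (fun _ : Fin m => S),
          if b j = y then ∏ i ∈ univ.filter (fun i => i ≠ j), h (b i) y else 0)
        = ∑ b ∈ Fintype.piFinset (fun _ : Fin m => S), ∏ i, g i (b i) :=
          Finset.sum_congr rfl (fun b _ => hpt b)
      _ = ∏ i, ∑ x ∈ S, g i x := (Finset.prod_univ_sum _ _).symm
      _ = (∑ x ∈ S, g j x) * ∏ i ∈ univ.erase j, ∑ x ∈ S, g i x :=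
          (Finset.mul_prod_erase univ _ (mem_univ j)).symm
      _ ≤ 1 * (B * τ2) ^ (m - 1) := by
          have hgj : (∑ x ∈ S, g j x) = 1 := by
            simp only [hgdef, if_pos rfl]
            rw [Finset.sum_ite_eq' S y (fun _ => (1:ℝ)), if_pos hy]
          rw [hgj]
          apply mul_le_mul_of_nonneg_left _ (by norm_num)
          have hb1 : ∏ i ∈ univ.erase j, (∑ x ∈ S, g i x)
              ≤ ∏ i ∈ univ.erase j, (B * τ2) := by
            apply Finset.prod_le_prod
            · intro i hi
              apply Finset.sum_nonneg
              intro x hx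
              simp only [hgdef, if_neg (Finset.mem_erase.mp hi).1]
              exact hnonneg x y
            · intro i hi
              simp only [hgdef, if_neg (Finset.mem_erase.mp hi).1]
              exact sum_gcd_le q hq B hB2 hBq y hy
          calc ∏ i ∈ univ.erase j, (∑ x ∈ S, g i x) ≤ ∏ i ∈ univ.erase j, (B * τ2) := hb1
            _ = (B * τ2) ^ (m - 1) := by
                rw [Finset.prod_const, Finset.card_erase_of_mem (mem_univ j),
                  Finset.card_univ, Fintype.card_fin]
      _ = (B * τ2) ^ (m - 1) := one_mul _
  have hScard : (S.card : ℝ) ≤ B := by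
    have h0 : (0:ℤ) ≤ ⌊B⌋ := by
      have : (1:ℤ) ≤ ⌊B⌋ := Int.le_floor.mpr (by norm_num; linarith)
      omega
    have h1 : S.card = (⌊B⌋ + 1 - 1).toNat := Int.card_Icc 1 ⌊B⌋
    have h2 : ((⌊B⌋ + 1 - 1).toNat : ℤ) = ⌊B⌋ := by rw [Int.toNat_of_nonneg (by omega)]; ring
    have h3 : ((S.card : ℤ) : ℝ) = ((⌊B⌋ : ℤ) : ℝ) := by rw [h1, h2]
    push_cast at h3
    rw [h3]
    exact_mod_cast Int.floor_le B
  calc (∑ y ∈ S, ∑ b ∈ Fintype.piFinset (fun _ : Fin m => S),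
        if b j = y then ∏ i ∈ univ.filter (fun i => i ≠ j), h (b i) y else 0)
      ≤ ∑ y ∈ S, (B * τ2) ^ (m - 1) := Finset.sum_le_sum step2
    _ = S.card * (B * τ2) ^ (m - 1) := by rw [Finset.sum_const, nsmul_eq_mul]
    _ ≤ B * (B * τ2) ^ (m - 1) := by
        apply mul_le_mul_of_nonneg_right hScard (by positivity)

lemma minGcd_le_sum {m : ℕ} (b : Fin m → ℤ) (q : ℕ) (hq : 0 < q) :
    (minGcd b q : ℝ) ≤ ∑ j : Fin m, ∏ i ∈ Finset.univ.filter (fun i => i ≠ j),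
      (if b i ≠ b j then ((Int.gcd (b i - b j) (q:ℤ)) : ℝ) else 0) := by
  classical
  have hterm_nonneg : ∀ j : Fin m,
      0 ≤ ∏ i ∈ Finset.univ.filter (fun i => i ≠ j),
        (if b i ≠ b j then ((Int.gcd (b i - b j) (q:ℤ)) : ℝ) else 0) := by
    intro j
    apply Finset.prod_nonneg
    intro i _
    split
    · exact Nat.cast_nonneg _
    · exact le_refl 0
  unfold minGcd
  split
  · next hne =>
    have hmem := Finset.min'_mem
      ((Finset.univ.filter fun j : Fin m => Aprod b j ≠ 0).image
        fun j => Int.gcd (Aprod b j) q) (hne.image _)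
    obtain ⟨j₀, hj₀mem, hj₀eq⟩ := Finset.mem_image.mp hmem
    have hj₀ : Aprod b j₀ ≠ 0 := (Finset.mem_filter.mp hj₀mem).2
    have hne0 : ∀ i ∈ Finset.univ.filter (fun i => i ≠ j₀), b i - b j₀ ≠ 0 := by
      intro i hi
      exact fun hzero => hj₀ (Finset.prod_eq_zero hi hzero)
    rw [← hj₀eq]
    have h1 : Int.gcd (Aprod b j₀) (q:ℤ) ≤
        ∏ i ∈ Finset.univ.filter (fun i => i ≠ j₀), Int.gcd (b i - b j₀) (q:ℤ) :=
      gcd_prod_le q hq _ _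
    have h2 : ((∏ i ∈ Finset.univ.filter (fun i => i ≠ j₀),
        Int.gcd (b i - b j₀) (q:ℤ) : ℕ) : ℝ)
        = ∏ i ∈ Finset.univ.filter (fun i => i ≠ j₀),
          (if b i ≠ b j₀ then ((Int.gcd (b i - b j₀) (q:ℤ)) : ℝ) else 0) := by
      rw [Nat.cast_prod]
      apply Finset.prod_congr rfl
      intro i hi
      rw [if_pos (sub_ne_zero.mp (hne0 i hi))]
    calc ((Int.gcd (Aprod b j₀) (q:ℤ) : ℕ) : ℝ)
        ≤ ((∏ i ∈ Finset.univ.filter (fun i => i ≠ j₀),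
            Int.gcd (b i - b j₀) (q:ℤ) : ℕ) : ℝ) := by exact_mod_cast h1
      _ = _ := h2
      _ ≤ ∑ j : Fin m, ∏ i ∈ Finset.univ.filter (fun i => i ≠ j),
            (if b i ≠ b j then ((Int.gcd (b i - b j) (q:ℤ)) : ℝ) else 0) :=
          Finset.single_le_sum (fun j _ => hterm_nonneg j) (Finset.mem_univ j₀)
  · next =>
    push_cast
    exact Finset.sum_nonneg (fun j _ => hterm_nonneg j)

theorem sum_minGcd_le_tau_pow (r q : ℕ) (hr : 1 ≤ r) (hq : 0 < q) (B : ℝ)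
    (hB2 : 2 ≤ B) (hBq : B < Real.sqrt q) :
    ∑ b ∈ Fintype.piFinset fun _ : Fin (2 * r) => Finset.Icc (1 : ℤ) ⌊B⌋,
        (minGcd b q : ℝ)
      ≤ 2 * r * ((Nat.divisors q).card / 2 : ℝ) ^ (2 * r - 1) * B ^ (2 * r) := by
  classical
  set τ2 : ℝ := ((Nat.divisors q).card : ℝ) / 2 with hτ2
  have hτ2nn : 0 ≤ τ2 := by positivity
  have hBnn : (0:ℝ) ≤ B := by linarith
  calc ∑ b ∈ Fintype.piFinset fun _ : Fin (2 * r) => Finset.Icc (1 : ℤ) ⌊B⌋,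
        (minGcd b q : ℝ)
      ≤ ∑ b ∈ Fintype.piFinset fun _ : Fin (2 * r) => Finset.Icc (1 : ℤ) ⌊B⌋,
          ∑ j : Fin (2 * r), ∏ i ∈ Finset.univ.filter (fun i => i ≠ j),
            (if b i ≠ b j then ((Int.gcd (b i - b j) (q:ℤ)) : ℝ) else 0) :=
        Finset.sum_le_sum (fun b _ => minGcd_le_sum b q hq)
    _ = ∑ j : Fin (2 * r), ∑ b ∈ Fintype.piFinset fun _ : Fin (2 * r) => Finset.Icc (1 : ℤ) ⌊B⌋,
          ∏ i ∈ Finset.univ.filter (fun i => i ≠ j),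
            (if b i ≠ b j then ((Int.gcd (b i - b j) (q:ℤ)) : ℝ) else 0) := Finset.sum_comm
    _ ≤ ∑ j : Fin (2 * r), B * (B * τ2) ^ (2 * r - 1) :=
        Finset.sum_le_sum (fun j _ => fubini_bound (2 * r) q hq B hB2 hBq j)
    _ = (2 * r : ℕ) * (B * (B * τ2) ^ (2 * r - 1)) := by
        rw [Finset.sum_const, Finset.card_univ, Fintype.card_fin, nsmul_eq_mul]
    _ = 2 * r * τ2 ^ (2 * r - 1) * B ^ (2 * r) := by
        have hsucc : 2 * r - 1 + 1 = 2 * r := by omega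
        have hpow : B * (B * τ2) ^ (2 * r - 1) = τ2 ^ (2 * r - 1) * B ^ (2 * r) := by
          rw [mul_pow]
          calc B * (B ^ (2*r-1) * τ2 ^ (2*r-1)) = τ2 ^ (2*r-1) * (B ^ (2*r-1) * B) := by ring
            _ = τ2 ^ (2*r-1) * B ^ (2*r) := by rw [← pow_succ, hsucc]
        rw [hpow]
        push_cast
        ring
end

section
/- Let r ≥ 1 be an integer and q a positive integer, and let B ≥ 2 be a real number. Define, for integers b₁,…,b_{2r}, A_j = ∏_{i≠j} (b_i − b_j). Then the sum over all tuples (b₁,…,b_{2r}) with 1 ≤ b_i ≤ B of min{gcd(A_j, q) : 1 ≤ j ≤ 2r, A_j ≠ 0} (interpreting the minimum over an empty set as 0) is at most 2r·⌊B⌋^{2r}·τ_{2r}(q). -/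
open Finset

/-- `tauk k n` : the number of ways to write `n` as an ordered product of `k`
positive integers (the `k`-dimensional divisor function `τ_k`). -/
def tauk (k n : ℕ) : ℕ :=
  ((Fintype.piFinset fun _ : Fin k => n.divisors).filter fun f => ∏ i, f i = n).card

lemma natAbs_prod' {ι : Type*} (s : Finset ι) (f : ι → ℤ) :
    (∏ i ∈ s, f i).natAbs = ∏ i ∈ s, (f i).natAbs :=
  map_prod Int.natAbsHom f s

lemma dvd_prod_factor {ι : Type*} [DecidableEq ι] (s : Finset ι) (h : ι → ℕ) :
    ∀ g : ℕ, g ∣ ∏ i ∈ s, h i → ∃ d : ι → ℕ, (∀ i ∈ s, d i ∣ h i) ∧ ∏ i ∈ s, d i = g := by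
  induction s using Finset.induction_on with
  | empty =>
      intro g hg
      simp only [Finset.prod_empty] at hg
      exact ⟨fun _ => 1, by simp, by simpa using (Nat.dvd_one.mp hg).symm⟩
  | @insert a s ha ih =>
      intro g hg
      rw [Finset.prod_insert ha] at hg
      obtain ⟨g1, g2, h1, h2, rfl⟩ := Nat.dvd_mul.mp hg
      obtain ⟨d, hd, hprod⟩ := ih g2 h2
      refine ⟨Function.update d a g1, ?_, ?_⟩
      · intro i hi
        by_cases hia : i = a
        · subst hia; rw [Function.update_self]; exact h1
        · rw [Function.update_of_ne hia]
          exact hd i ((Finset.mem_insert.mp hi).resolve_left hia)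
      · rw [Finset.prod_insert ha, Function.update_self,
          Finset.prod_congr rfl fun i hi =>
            Function.update_of_ne (by rintro rfl; exact ha hi) g1 d, hprod]

lemma count_cong (M t : ℤ) (ht : t ∈ Finset.Icc (1:ℤ) M) (D : ℤ) (hD : 0 < D) :
    D * ((Finset.Icc (1:ℤ) M).filter fun x => x ≠ t ∧ D ∣ x - t).card ≤ M - 1 := by
  simp only [Finset.mem_Icc] at ht
  set C := (Finset.Icc (1:ℤ) M).filter fun x => x ≠ t ∧ D ∣ x - t with hC
  set L : ℤ := (t - 1) / D with hLdef
  set U : ℤ := (M - t) / D with hUdef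
  have hL0 : 0 ≤ L := Int.ediv_nonneg (by linarith) hD.le
  have hU0 : 0 ≤ U := Int.ediv_nonneg (by linarith) hD.le
  have hmap : ∀ x ∈ C, (x - t) / D ∈ (Finset.Icc (-L) U).erase 0 := by
    intro x hx
    simp only [hC, Finset.mem_filter, Finset.mem_Icc] at hx
    obtain ⟨⟨hx1, hx2⟩, hxt, k, hk⟩ := hx
    have hkeq : (x - t) / D = k := by rw [hk, Int.mul_ediv_cancel_left _ hD.ne']
    rw [hkeq]
    have hk0 : k ≠ 0 := by rintro rfl; simp at hk; exact hxt (by linarith)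
    have hup : k ≤ U := by
      rw [← hkeq]; exact Int.ediv_le_ediv hD (by linarith)
    have hlow : -L ≤ k := by
      have h1 : -k = (t - x) / D := by
        rw [show t - x = D * (-k) by linarith, Int.mul_ediv_cancel_left _ hD.ne']
      have h2 : (t - x) / D ≤ L := Int.ediv_le_ediv hD (by linarith)
      omega
    simp only [Finset.mem_erase, Finset.mem_Icc]
    exact ⟨hk0, hlow, hup⟩
  have hinj : Set.InjOn (fun x => (x - t) / D) C := by
    intro x hx y hy hxy
    simp only [Finset.mem_coe, hC, Finset.mem_filter] at hx hy
    have hx' := Int.ediv_mul_cancel hx.2.2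
    have hy' := Int.ediv_mul_cancel hy.2.2
    have h3 : (x - t) / D * D = (y - t) / D * D := by
      simp only at hxy; rw [hxy]
    rw [hx', hy'] at h3
    linarith
  have hcard := Finset.card_le_card_of_injOn _ hmap hinj
  have h0mem : (0:ℤ) ∈ Finset.Icc (-L) U := by simp only [Finset.mem_Icc]; omega
  rw [Finset.card_erase_of_mem h0mem, Int.card_Icc] at hcard
  have hcard2 : (C.card : ℤ) ≤ U + L := by omega
  have e1 := Int.mul_ediv_add_emod (M - t) D
  have e2 := Int.mul_ediv_add_emod (t - 1) D
  have m1 := Int.emod_nonneg (M - t) hD.ne'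
  have m2 := Int.emod_nonneg (t - 1) hD.ne'
  have h4 : D * (C.card : ℤ) ≤ D * (U + L) := mul_le_mul_of_nonneg_left hcard2 hD.le
  nlinarith [h4, e1, e2, m1, m2]


lemma single2 {α β : Type*} (s : Finset α) (t : Finset β) (F : α → β → ℕ) (a : α)
    (ha : a ∈ s) (b : β) (hb : b ∈ t) : F a b ≤ ∑ x ∈ s, ∑ y ∈ t, F x y := by
  calc F a b ≤ ∑ y ∈ t, F a y := Finset.single_le_sum (fun _ _ => Nat.zero_le _) hb
    _ ≤ ∑ x ∈ s, ∑ y ∈ t, F x y :=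
      Finset.single_le_sum (f := fun x => ∑ y ∈ t, F x y) (fun _ _ => Nat.zero_le _) ha

open Classical in
noncomputable def W {m : ℕ} (b : Fin m → ℤ) (j : Fin m) (f : Fin m → ℕ) : ℕ :=
  if ∀ i, i ≠ j → b i ≠ b j ∧ ((f i : ℤ) ∣ b i - b j) then
    ∏ i ∈ Finset.univ.filter fun i => i ≠ j, f i
  else 0

lemma perb {m q : ℕ} (hq : 0 < q) (b : Fin m → ℤ) :
    minGcd b q ≤ ∑ j : Fin m, ∑ f ∈ (Fintype.piFinset fun _ : Fin m => q.divisors).filter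
      (fun f => ∏ i, f i = q), W b j f := by
  unfold minGcd
  split_ifs with h
  · have hmin := Finset.min'_mem
      ((Finset.univ.filter fun j : Fin m => Aprod b j ≠ 0).image
        fun j => Int.gcd (Aprod b j) q) (h.image _)
    obtain ⟨j, hjP, hj⟩ := Finset.mem_image.mp hmin
    have hAj : Aprod b j ≠ 0 := (Finset.mem_filter.mp hjP).2
    rw [← hj]
    set g := Int.gcd (Aprod b j) q with hg
    have hgq : g ∣ q := Int.natCast_dvd_natCast.mp (Int.gcd_dvd_right _ _)
    have hgA : g ∣ ∏ i ∈ Finset.univ.filter fun i => i ≠ j, (b i - b j).natAbs := by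
      have h1 : (g:ℤ) ∣ Aprod b j := Int.gcd_dvd_left _ _
      have h2 : g ∣ (Aprod b j).natAbs := Int.natCast_dvd.mp h1
      rwa [Aprod, natAbs_prod'] at h2
    obtain ⟨d, hd, hdprod⟩ := dvd_prod_factor _ _ g hgA
    have hbne : ∀ i, i ≠ j → b i ≠ b j := by
      intro i hij
      rw [Aprod] at hAj
      have := Finset.prod_ne_zero_iff.mp hAj i (by simp [hij])
      exact sub_ne_zero.mp this
    set f : Fin m → ℕ := fun i => if i = j then q / g else d i with hf
    have hfT : f ∈ (Fintype.piFinset fun _ : Fin m => q.divisors).filter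
        (fun f => ∏ i, f i = q) := by
      simp only [Finset.mem_filter, Fintype.mem_piFinset]
      constructor
      · intro i
        by_cases hij : i = j
        · subst hij; simp only [hf, if_pos rfl]
          exact Nat.mem_divisors.mpr ⟨Nat.div_dvd_of_dvd hgq, hq.ne'⟩
        · simp only [hf, if_neg hij]
          refine Nat.mem_divisors.mpr ⟨dvd_trans ?_ hgq, hq.ne'⟩
          exact hdprod ▸ Finset.dvd_prod_of_mem d (by simp [hij])
      · rw [← Finset.mul_prod_erase Finset.univ f (Finset.mem_univ j),
          ← Finset.filter_ne' Finset.univ j]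
        have h5 : ∏ i ∈ Finset.univ.filter fun i => i ≠ j, f i = g := by
          rw [Finset.prod_congr rfl fun i hi => ?_, hdprod]
          simp only [Finset.mem_filter] at hi
          simp [hf, hi.2]
        rw [h5]
        simp only [hf, if_pos rfl]
        exact Nat.div_mul_cancel hgq
    have hWval : g ≤ W b j f := by
      unfold W
      rw [if_pos ?cond]
      case cond =>
        intro i hij
        refine ⟨hbne i hij, ?_⟩
        have : (f i : ℤ) = (d i : ℤ) := by simp [hf, hij]
        rw [this]
        exact Int.natCast_dvd.mpr (hd i (by simp [hij]))
      refine le_of_eq ?_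
      rw [← hdprod]
      exact Finset.prod_congr rfl fun i hi => by
        simp only [Finset.mem_filter] at hi
        simp [hf, hi.2]
    exact le_trans hWval (single2 Finset.univ _ (fun j' f' => W b j' f') j (Finset.mem_univ j) f hfT)
  · exact Nat.zero_le _

lemma inner_bound {m q : ℕ} (hq : 0 < q) (M : ℤ) (hM : 0 ≤ M) (j : Fin m)
    (f : Fin m → ℕ) (hf : ∀ i, f i ∈ q.divisors) :
    ∑ b ∈ Fintype.piFinset fun _ : Fin m => Finset.Icc (1:ℤ) M, W b j f
      ≤ M.toNat ^ m := by
  classical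
  set S := Fintype.piFinset fun _ : Fin m => Finset.Icc (1:ℤ) M with hS
  unfold W
  rw [← Finset.sum_filter, Finset.sum_const, smul_eq_mul]
  rw [Finset.card_eq_sum_card_fiberwise
    (f := fun b => b j) (t := Finset.Icc (1:ℤ) M)
    (fun b hb => (Fintype.mem_piFinset.mp (Finset.mem_filter.mp hb).1) j)]
  rw [Finset.sum_mul]
  have h4 : ∀ t ∈ Finset.Icc (1:ℤ) M,
      ((S.filter fun b => ∀ i, i ≠ j → b i ≠ b j ∧ ((f i : ℤ) ∣ b i - b j)).filter
        fun b => b j = t).card * (∏ i ∈ Finset.univ.filter fun i => i ≠ j, f i)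
      ≤ M.toNat ^ (m - 1) := by
    intro t ht
    have h3 : ((S.filter fun b => ∀ i, i ≠ j → b i ≠ b j ∧ ((f i : ℤ) ∣ b i - b j)).filter
        fun b => b j = t) =
        Fintype.piFinset (fun i => if i = j then {t} else
          (Finset.Icc (1:ℤ) M).filter fun x => x ≠ t ∧ ((f i : ℤ) ∣ x - t)) := by
      ext b
      simp only [Finset.mem_filter, Fintype.mem_piFinset, hS]
      constructor
      · rintro ⟨⟨hSb, hp⟩, hbj⟩ i
        by_cases hij : i = j
        · subst hij; rw [if_pos rfl]; simpa using hbj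
        · rw [if_neg hij, Finset.mem_filter]
          obtain ⟨hne, hdvd⟩ := hp i hij
          exact ⟨hSb i, by rw [← hbj]; exact hne, by rw [← hbj]; exact hdvd⟩
      · intro hmem
        have hbj : b j = t := by have := hmem j; rw [if_pos rfl] at this; simpa using this
        refine ⟨⟨fun i => ?_, fun i hij => ?_⟩, hbj⟩
        · by_cases hij : i = j
          · subst hij; rw [hbj]; exact ht
          · have := hmem i; rw [if_neg hij, Finset.mem_filter] at this; exact this.1
        · have := hmem i; rw [if_neg hij, Finset.mem_filter] at this
          exact ⟨by rw [hbj]; exact this.2.1, by rw [hbj]; exact this.2.2⟩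
    rw [h3, Fintype.card_piFinset, mul_comm,
      ← Finset.mul_prod_erase Finset.univ _ (Finset.mem_univ j)]
    rw [if_pos rfl, Finset.card_singleton, one_mul]
    have herase : (Finset.univ : Finset (Fin m)).erase j
        = Finset.univ.filter fun i => i ≠ j := (Finset.filter_ne' _ _).symm
    rw [herase, ← Finset.prod_mul_distrib]
    have hcardf : (Finset.univ.filter fun i => i ≠ j : Finset (Fin m)).card = m - 1 := by
      rw [Finset.filter_ne', Finset.card_erase_of_mem (Finset.mem_univ j),
        Finset.card_univ, Fintype.card_fin]
    calc ∏ i ∈ Finset.univ.filter fun i => i ≠ j,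
          (f i * (if i = j then ({t} : Finset ℤ) else
            (Finset.Icc (1:ℤ) M).filter fun x => x ≠ t ∧ ((f i : ℤ) ∣ x - t)).card)
        ≤ ∏ _i ∈ Finset.univ.filter fun i => i ≠ j, M.toNat := by
          refine Finset.prod_le_prod' fun i hi => ?_
          simp only [Finset.mem_filter] at hi
          rw [if_neg hi.2]
          have hpos : 0 < f i := Nat.pos_of_mem_divisors (hf i)
          have hcc := count_cong M t ht (f i) (by exact_mod_cast hpos)
          have h6 : (f i : ℤ) * (((Finset.Icc (1:ℤ) M).filter
              fun x => x ≠ t ∧ ((f i : ℤ) ∣ x - t)).card : ℤ) ≤ (M.toNat : ℤ) := by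
            rw [Int.toNat_of_nonneg hM]; linarith
          exact_mod_cast h6
      _ = M.toNat ^ (m - 1) := by rw [Finset.prod_const, hcardf]
  calc ∑ t ∈ Finset.Icc (1:ℤ) M,
        ((S.filter fun b => ∀ i, i ≠ j → b i ≠ b j ∧ ((f i : ℤ) ∣ b i - b j)).filter
          fun b => b j = t).card * (∏ i ∈ Finset.univ.filter fun i => i ≠ j, f i)
      ≤ ∑ _t ∈ Finset.Icc (1:ℤ) M, M.toNat ^ (m - 1) := Finset.sum_le_sum h4
    _ = M.toNat * M.toNat ^ (m - 1) := by
        rw [Finset.sum_const, smul_eq_mul, Int.card_Icc]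
        norm_num
    _ = M.toNat ^ m := by
        have hm := Fin.pos j
        rw [← pow_succ']
        congr 1
        omega

theorem sum_minGcd_le_tauk (r q : ℕ) (hr : 1 ≤ r) (hq : 0 < q) (B : ℝ)
    (hB2 : 2 ≤ B) :
    ∑ b ∈ Fintype.piFinset fun _ : Fin (2 * r) => Finset.Icc (1 : ℤ) ⌊B⌋,
        (minGcd b q : ℝ)
      ≤ 2 * r * ((⌊B⌋ : ℝ)) ^ (2 * r) * (tauk (2 * r) q : ℝ) := by
  classical
  have hM2 : (2:ℤ) ≤ ⌊B⌋ := by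
    exact_mod_cast Int.le_floor.mpr (by exact_mod_cast hB2)
  have h0M : (0:ℤ) ≤ ⌊B⌋ := by linarith
  set m := 2 * r with hm
  set M : ℤ := ⌊B⌋ with hMdef
  set S := Fintype.piFinset fun _ : Fin m => Finset.Icc (1:ℤ) M with hSdef
  set T := (Fintype.piFinset fun _ : Fin m => q.divisors).filter
    (fun f => ∏ i, f i = q) with hTdef
  have hTcard : T.card = tauk m q := rfl
  have main : ∑ b ∈ S, minGcd b q ≤ m * (tauk m q * M.toNat ^ m) := by
    calc ∑ b ∈ S, minGcd b q ≤ ∑ b ∈ S, ∑ j : Fin m, ∑ f ∈ T, W b j f :=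
        Finset.sum_le_sum fun b _ => perb hq b
      _ = ∑ j : Fin m, ∑ f ∈ T, ∑ b ∈ S, W b j f := by
          rw [Finset.sum_comm]
          exact Finset.sum_congr rfl fun j _ => Finset.sum_comm
      _ ≤ ∑ _j : Fin m, ∑ _f ∈ T, M.toNat ^ m := by
          refine Finset.sum_le_sum fun j _ => Finset.sum_le_sum fun f hf => ?_
          exact inner_bound hq M h0M j f
            fun i => (Fintype.mem_piFinset.mp (Finset.mem_filter.mp hf).1) i
      _ = m * (tauk m q * M.toNat ^ m) := by
          rw [Finset.sum_const, Finset.sum_const, Finset.card_univ, Fintype.card_fin,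
            smul_eq_mul, smul_eq_mul, hTcard]
  have hNat : ((M.toNat : ℤ)) = M := Int.toNat_of_nonneg h0M
  calc ∑ b ∈ S, (minGcd b q : ℝ)
      = ((∑ b ∈ S, minGcd b q : ℕ) : ℝ) := by rw [Nat.cast_sum]
    _ ≤ ((m * (tauk m q * M.toNat ^ m) : ℕ) : ℝ) := Nat.cast_le.mpr main
    _ = 2 * r * ((M : ℝ)) ^ m * (tauk m q : ℝ) := by
        have hNR : ((M.toNat : ℝ)) = (M : ℝ) := by exact_mod_cast congrArg (fun z : ℤ => (z : ℝ)) hNat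
        push_cast [hNR, hm]
        ring
end

section
/- For every real A ≥ 2 and integer N ≥ 2, ∑_{1 ≤ a₁ ≤ A} ∑_{1 ≤ a₂ ≤ A} gcd(a₁,a₂)/max{a₁,a₂} ≤ 2A·∑_{d ≤ A} φ(d)/d². -/
open Finset

/-- Sum of 1/max over a square box is at most 2M. -/
lemma max_sum_le_aux (M : ℕ) :
    ∑ b1 ∈ Icc 1 M, ∑ b2 ∈ Icc 1 M, (1:ℝ)/((max b1 b2 : ℕ) : ℝ) ≤ 2*M := by
  have key : ∀ b1 ∈ Icc 1 M,
      ∑ b2 ∈ Icc 1 M, (if b2 ≤ b1 then (1:ℝ)/(b1:ℝ) else 0) = 1 := by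
    intro b1 hb1
    rw [mem_Icc] at hb1
    rw [← Finset.sum_filter]
    have hf : (Icc 1 M).filter (fun b2 => b2 ≤ b1) = Icc 1 b1 := by
      ext x; simp only [mem_filter, mem_Icc]; omega
    rw [hf, Finset.sum_const, Nat.card_Icc]
    have hb10 : (b1:ℝ) ≠ 0 := by
      have : (0:ℝ) < b1 := by exact_mod_cast hb1.1
      exact this.ne'
    simp only [Nat.add_sub_cancel, nsmul_eq_mul]
    field_simp
  have step : ∑ b1 ∈ Icc 1 M, ∑ b2 ∈ Icc 1 M, (1:ℝ)/((max b1 b2 : ℕ) : ℝ)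
      ≤ ∑ b1 ∈ Icc 1 M, ∑ b2 ∈ Icc 1 M,
        ((if b2 ≤ b1 then (1:ℝ)/(b1:ℝ) else 0) + (if b1 ≤ b2 then (1:ℝ)/(b2:ℝ) else 0)) := by
    apply Finset.sum_le_sum; intro b1 hb1
    apply Finset.sum_le_sum; intro b2 hb2
    rw [mem_Icc] at hb1 hb2
    rcases le_total b2 b1 with h | h
    · rw [if_pos h, max_eq_left h]
      have h2 : (0:ℝ) ≤ if b1 ≤ b2 then (1:ℝ)/(b2:ℝ) else 0 := by
        split <;> positivity
      linarith
    · rw [if_pos h, max_eq_right h]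
      have h2 : (0:ℝ) ≤ if b2 ≤ b1 then (1:ℝ)/(b1:ℝ) else 0 := by
        split <;> positivity
      linarith
  refine step.trans ?_
  rw [show (2:ℝ)*M = M + M by ring]
  have e1 : ∑ b1 ∈ Icc 1 M, ∑ b2 ∈ Icc 1 M,
      ((if b2 ≤ b1 then (1:ℝ)/(b1:ℝ) else 0) + (if b1 ≤ b2 then (1:ℝ)/(b2:ℝ) else 0))
      = (∑ b1 ∈ Icc 1 M, ∑ b2 ∈ Icc 1 M, (if b2 ≤ b1 then (1:ℝ)/(b1:ℝ) else 0))
      + ∑ b1 ∈ Icc 1 M, ∑ b2 ∈ Icc 1 M, (if b1 ≤ b2 then (1:ℝ)/(b2:ℝ) else 0) := by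
    rw [← Finset.sum_add_distrib]
    exact Finset.sum_congr rfl fun b1 _ => by rw [← Finset.sum_add_distrib]
  rw [e1]
  have h1 : (∑ b1 ∈ Icc 1 M, ∑ b2 ∈ Icc 1 M, (if b2 ≤ b1 then (1:ℝ)/(b1:ℝ) else 0)) = M := by
    rw [Finset.sum_congr rfl key, Finset.sum_const, Nat.card_Icc]
    simp
  have h2 : (∑ b1 ∈ Icc 1 M, ∑ b2 ∈ Icc 1 M, (if b1 ≤ b2 then (1:ℝ)/(b2:ℝ) else 0)) = M := by
    rw [Finset.sum_comm, Finset.sum_congr rfl key, Finset.sum_const, Nat.card_Icc]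
    simp
  rw [h1, h2]

lemma filter_dvd_eq_image (N d : ℕ) (hd : 1 ≤ d) :
    (Icc 1 N).filter (fun a => d ∣ a) = (Icc 1 (N/d)).image (fun b => d*b) := by
  ext a
  simp only [mem_filter, mem_image, mem_Icc]
  constructor
  · rintro ⟨⟨ha1, haN⟩, b, rfl⟩
    refine ⟨b, ⟨?_, ?_⟩, rfl⟩
    · rcases Nat.eq_zero_or_pos b with h | h
      · subst h; simp at ha1
      · exact h
    · rw [Nat.le_div_iff_mul_le (by omega)]
      calc b * d = d * b := mul_comm _ _
        _ ≤ N := haN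
  · rintro ⟨b, ⟨hb1, hb2⟩, rfl⟩
    rw [Nat.le_div_iff_mul_le (by omega)] at hb2
    refine ⟨⟨Nat.one_le_iff_ne_zero.mpr ?_, ?_⟩, b, rfl⟩
    · exact Nat.mul_ne_zero (by omega) (by omega)
    · calc d * b = b * d := mul_comm _ _
        _ ≤ N := hb2

theorem gcd_double_sum_le (A : ℝ) (hA : 2 ≤ A) (N : ℕ) (hN : 2 ≤ N) :
    ∑ a1 ∈ Finset.Icc 1 ⌊A⌋₊, ∑ a2 ∈ Finset.Icc 1 ⌊A⌋₊,
        (Nat.gcd a1 a2 : ℝ) / (max a1 a2 : ℕ)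
      ≤ 2 * A * ∑ d ∈ Finset.Icc 1 ⌊A⌋₊, (Nat.totient d : ℝ) / (d : ℝ) ^ 2 := by
  set N₀ := ⌊A⌋₊ with hN₀
  have hA0 : (0:ℝ) < A := by linarith
  have hfloor : (N₀ : ℝ) ≤ A := Nat.floor_le hA0.le
  -- Step 1: expand gcd via totient sum
  have hgcd : ∀ a1 ∈ Icc 1 N₀, ∀ a2 ∈ Icc 1 N₀,
      (Nat.gcd a1 a2 : ℝ) / ((max a1 a2 : ℕ) : ℝ)
      = ∑ d ∈ Icc 1 N₀,
          (if d ∣ a1 ∧ d ∣ a2 then (Nat.totient d : ℝ) / ((max a1 a2 : ℕ):ℝ) else 0) := by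
    intro a1 h1 a2 h2
    rw [mem_Icc] at h1 h2
    have hg : Nat.gcd a1 a2 ≠ 0 := by
      simp only [ne_eq, Nat.gcd_eq_zero_iff, not_and_or]; left; omega
    have hsum : ((Nat.gcd a1 a2 : ℕ) : ℝ)
        = ∑ d ∈ (Nat.gcd a1 a2).divisors, (Nat.totient d : ℝ) := by
      rw [← Nat.cast_sum]
      exact_mod_cast congrArg (Nat.cast (R := ℝ)) (Nat.sum_totient _).symm
    have hdiv : (Nat.gcd a1 a2).divisors
        = (Icc 1 N₀).filter (fun d => d ∣ a1 ∧ d ∣ a2) := by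
      ext d
      simp only [Nat.mem_divisors, Nat.dvd_gcd_iff, mem_filter, mem_Icc]
      constructor
      · rintro ⟨⟨hd1, hd2⟩, _⟩
        have hle : d ≤ a1 := Nat.le_of_dvd (by omega) hd1
        have hpos : 1 ≤ d := Nat.pos_of_dvd_of_pos hd1 (by omega)
        exact ⟨⟨hpos, by omega⟩, hd1, hd2⟩
      · rintro ⟨_, hd1, hd2⟩
        exact ⟨⟨hd1, hd2⟩, hg⟩
    rw [hsum, hdiv, Finset.sum_div, Finset.sum_filter]
  rw [Finset.sum_congr rfl (fun a1 h1 => Finset.sum_congr rfl (fun a2 h2 => hgcd a1 h1 a2 h2))]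
  -- Step 2: swap sums
  have hswap : ∑ a1 ∈ Icc 1 N₀, ∑ a2 ∈ Icc 1 N₀, ∑ d ∈ Icc 1 N₀,
      (if d ∣ a1 ∧ d ∣ a2 then (Nat.totient d : ℝ) / ((max a1 a2 : ℕ):ℝ) else 0)
      = ∑ d ∈ Icc 1 N₀, ∑ a1 ∈ Icc 1 N₀, ∑ a2 ∈ Icc 1 N₀,
      (if d ∣ a1 ∧ d ∣ a2 then (Nat.totient d : ℝ) / ((max a1 a2 : ℕ):ℝ) else 0) := by
    rw [Finset.sum_congr rfl (fun a1 _ => Finset.sum_comm (s := Icc 1 N₀) (t := Icc 1 N₀)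
      (f := fun a2 d => if d ∣ a1 ∧ d ∣ a2 then (Nat.totient d : ℝ) / ((max a1 a2 : ℕ):ℝ) else 0))]
    exact Finset.sum_comm
  rw [hswap]
  -- Step 3: bound each d-term
  have hbound : ∀ d ∈ Icc 1 N₀,
      ∑ a1 ∈ Icc 1 N₀, ∑ a2 ∈ Icc 1 N₀,
        (if d ∣ a1 ∧ d ∣ a2 then (Nat.totient d : ℝ) / ((max a1 a2 : ℕ):ℝ) else 0)
      ≤ 2 * A * ((Nat.totient d : ℝ) / (d:ℝ)^2) := by
    intro d hd
    rw [mem_Icc] at hd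
    have hd0 : (0:ℝ) < d := by exact_mod_cast hd.1
    -- restrict to multiples
    have e1 : ∑ a1 ∈ Icc 1 N₀, ∑ a2 ∈ Icc 1 N₀,
        (if d ∣ a1 ∧ d ∣ a2 then (Nat.totient d : ℝ) / ((max a1 a2 : ℕ):ℝ) else 0)
        = ∑ a1 ∈ (Icc 1 N₀).filter (fun a => d ∣ a),
            ∑ a2 ∈ (Icc 1 N₀).filter (fun a => d ∣ a),
            (Nat.totient d : ℝ) / ((max a1 a2 : ℕ):ℝ) := by
      rw [Finset.sum_filter]
      refine Finset.sum_congr rfl fun a1 _ => ?_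
      by_cases h1 : d ∣ a1
      · simp only [h1, if_true, true_and, Finset.sum_filter]
      · simp only [h1, if_false, false_and]
        simp
    rw [e1, filter_dvd_eq_image N₀ d hd.1]
    have hinj : Set.InjOn (fun b => d*b) (Icc 1 (N₀/d)) := fun x _ y _ h => by
      simpa [Nat.mul_left_cancel_iff (show 0 < d by omega)] using h
    rw [Finset.sum_image hinj, Finset.sum_congr rfl
      (fun b1 _ => Finset.sum_image hinj)]
    set M := N₀ / d with hM
    have hmax : ∀ b1 b2 : ℕ, ((max (d*b1) (d*b2) : ℕ) : ℝ) = d * ((max b1 b2 : ℕ):ℝ) := by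
      intro b1 b2
      rcases le_total b1 b2 with h | h
      · rw [max_eq_right h, max_eq_right (Nat.mul_le_mul_left d h)]; push_cast; ring
      · rw [max_eq_left h, max_eq_left (Nat.mul_le_mul_left d h)]; push_cast; ring
    have e2 : ∑ b1 ∈ Icc 1 M, ∑ b2 ∈ Icc 1 M,
        (Nat.totient d : ℝ) / ((max (d*b1) (d*b2) : ℕ):ℝ)
        = (Nat.totient d : ℝ) / d * ∑ b1 ∈ Icc 1 M, ∑ b2 ∈ Icc 1 M,
          (1:ℝ)/((max b1 b2 : ℕ):ℝ) := by
      rw [Finset.mul_sum]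
      refine Finset.sum_congr rfl fun b1 _ => ?_
      rw [Finset.mul_sum]
      refine Finset.sum_congr rfl fun b2 _ => ?_
      rw [hmax]
      field_simp
    rw [e2]
    have hMA : (M:ℝ) ≤ A / d := by
      rw [le_div_iff₀ hd0]
      have h1 : M * d ≤ N₀ := Nat.div_mul_le_self N₀ d
      calc (M:ℝ) * d = ((M*d : ℕ):ℝ) := by push_cast; ring
        _ ≤ (N₀:ℝ) := by exact_mod_cast h1
        _ ≤ A := hfloor
    have hsle : ∑ b1 ∈ Icc 1 M, ∑ b2 ∈ Icc 1 M, (1:ℝ)/((max b1 b2 : ℕ):ℝ) ≤ 2*M :=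
      max_sum_le_aux M
    have htot : (0:ℝ) ≤ (Nat.totient d : ℝ) / d := by positivity
    calc (Nat.totient d : ℝ) / d * ∑ b1 ∈ Icc 1 M, ∑ b2 ∈ Icc 1 M, (1:ℝ)/((max b1 b2 : ℕ):ℝ)
        ≤ (Nat.totient d : ℝ) / d * (2*M) := mul_le_mul_of_nonneg_left hsle htot
      _ ≤ (Nat.totient d : ℝ) / d * (2*(A/d)) := by
          apply mul_le_mul_of_nonneg_left _ htot; linarith
      _ = 2 * A * ((Nat.totient d : ℝ) / (d:ℝ)^2) := by field_simp
  calc ∑ d ∈ Icc 1 N₀, ∑ a1 ∈ Icc 1 N₀, ∑ a2 ∈ Icc 1 N₀,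
      (if d ∣ a1 ∧ d ∣ a2 then (Nat.totient d : ℝ) / ((max a1 a2 : ℕ):ℝ) else 0)
      ≤ ∑ d ∈ Icc 1 N₀, 2 * A * ((Nat.totient d : ℝ) / (d:ℝ)^2) :=
        Finset.sum_le_sum hbound
    _ = 2 * A * ∑ d ∈ Icc 1 N₀, (Nat.totient d : ℝ) / (d:ℝ)^2 := by
        rw [Finset.mul_sum]
end
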